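/- Let B be the group of invertible upper triangular n×n matrices over an infinite field K, let N be the group of upper unitriangular matrices, and let w₀ be the permutation matrix of the longest element (the anti-diagonal permutation). Then the set N·w₀·B is Zariski-dense in GL(n,K). -/

import Mathlib

open Matrix MvPolynomial

/-- The anti-diagonal permutation matrix. -/
private def bigW (R : Type*) [CommRing R] (n : ℕ) : Matrix (Fin n) (Fin n) R :=
  Matrix.of fun i j => if (i : ℕ) + (j : ℕ) + 1 = n then 1 else 0

private lemma rev_cond {n : ℕ} (i l : Fin n) :
    ((i : ℕ) + (l : ℕ) + 1 = n) ↔ l = i.rev := by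
  rw [Fin.ext_iff, Fin.val_rev]
  have := i.isLt; have := l.isLt
  omega

private lemma bigW_mul {R : Type*} [CommRing R] {n : ℕ} (M : Matrix (Fin n) (Fin n) R)
    (i j : Fin n) : (bigW R n * M) i j = M i.rev j := by
  rw [Matrix.mul_apply]
  have : ∀ l : Fin n, bigW R n i l * M l j = if l = i.rev then M l j else 0 := by
    intro l
    simp only [bigW, of_apply, rev_cond, ite_mul, one_mul, zero_mul]
  rw [Finset.sum_congr rfl (fun l _ => this l), Finset.sum_ite_eq' Finset.univ i.rev]
  simp

private lemma mul_bigW {R : Type*} [CommRing R] {n : ℕ} (M : Matrix (Fin n) (Fin n) R)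
    (i j : Fin n) : (M * bigW R n) i j = M i j.rev := by
  rw [Matrix.mul_apply]
  have : ∀ l : Fin n, M i l * bigW R n l j = if l = j.rev then M i l else 0 := by
    intro l
    have hc : ((l : ℕ) + (j : ℕ) + 1 = n) ↔ l = j.rev := by
      rw [← rev_cond j l]; omega
    simp only [bigW, of_apply, hc, mul_ite, mul_one, mul_zero]
  rw [Finset.sum_congr rfl (fun l _ => this l), Finset.sum_ite_eq' Finset.univ j.rev]
  simp

private lemma bigW_bigW {R : Type*} [CommRing R] {n : ℕ} :
    bigW R n * bigW R n = (1 : Matrix (Fin n) (Fin n) R) := by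
  ext i j
  rw [bigW_mul]
  show (if ((i.rev : Fin n) : ℕ) + (j : ℕ) + 1 = n then (1 : R) else 0)
      = (1 : Matrix (Fin n) (Fin n) R) i j
  rw [Matrix.one_apply]
  have hv := Fin.val_rev i
  have hi := i.isLt
  have hj := j.isLt
  by_cases h : i = j
  · subst h
    rw [if_pos (by omega), if_pos rfl]
  · rw [if_neg, if_neg h]
    intro hc
    exact h (Fin.ext (by omega))

private lemma bigW_map {R S : Type*} [CommRing R] [CommRing S] (f : R →+* S) {n : ℕ} :
    (bigW R n).map f = bigW S n := by
  ext i j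
  simp [bigW, Matrix.map_apply, apply_ite f]

private lemma lu_exists {F : Type*} [Field F] :
    ∀ (n : ℕ) (Y : Matrix (Fin n) (Fin n) F),
    (∀ (k : ℕ) (hk : k ≤ n),
      (Matrix.of fun i j : Fin k => Y (Fin.castLE hk i) (Fin.castLE hk j)).det ≠ 0) →
    ∃ L U : Matrix (Fin n) (Fin n) F,
      (∀ i, L i i = 1) ∧ (∀ i j, i < j → L i j = 0) ∧
      (∀ i, U i i ≠ 0) ∧ (∀ i j : Fin n, j < i → U i j = 0) ∧ Y = L * U := by
  intro n
  induction n with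
  | zero =>
    intro Y _
    exact ⟨1, 1, fun i => i.elim0, fun i => i.elim0, fun i => i.elim0, fun i => i.elim0,
      Subsingleton.elim _ _⟩
  | succ n ih =>
    intro Y hminor
    have ha : Y 0 0 ≠ 0 := by
      have h := hminor 1 (by omega)
      rwa [Matrix.det_fin_one] at h
    set a := Y 0 0 with ha_def
    set S : Matrix (Fin n) (Fin n) F :=
      Matrix.of (fun i j => Y i.succ j.succ - Y i.succ 0 * Y 0 j.succ / a) with hS_def
    have hS : ∀ (k : ℕ) (hk : k ≤ n),
        (Matrix.of fun i j : Fin k => S (Fin.castLE hk i) (Fin.castLE hk j)).det ≠ 0 := by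
      intro k hk
      have hk1 : k + 1 ≤ n + 1 := Nat.succ_le_succ hk
      set M : Matrix (Fin (k+1)) (Fin (k+1)) F :=
        Matrix.of (fun i j => Y (Fin.castLE hk1 i) (Fin.castLE hk1 j)) with hM_def
      set c : Fin (k+1) → F := fun i => if i = 0 then 0 else -(M i 0 / a) with hc_def
      set M' : Matrix (Fin (k+1)) (Fin (k+1)) F :=
        Matrix.of (fun i j => M i j + c i * M 0 j) with hM'_def
      have hM00 : M 0 0 = a := rfl
      have hdet : M'.det = M.det :=
        Matrix.det_eq_of_forall_row_eq_smul_add_const c 0 (if_pos rfl) (fun i j => rfl)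
      have hcol : ∀ i : Fin k, M' i.succ 0 = 0 := by
        intro i
        simp only [hM'_def, hc_def, of_apply]
        rw [if_neg (Fin.succ_ne_zero i), hM00]
        field_simp
        ring
      have hsub : (M'.submatrix (Fin.succAbove 0) Fin.succ) =
          Matrix.of (fun i j : Fin k => S (Fin.castLE hk i) (Fin.castLE hk j)) := by
        ext i j
        simp only [Matrix.submatrix_apply, Fin.succAbove_zero, hM'_def, hc_def, of_apply,
          hS_def, hM_def]
        rw [if_neg (Fin.succ_ne_zero i)]
        have e1 : Fin.castLE hk1 (Fin.succ i) = Fin.succ (Fin.castLE hk i) := rfl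
        have e2 : Fin.castLE hk1 (Fin.succ j) = Fin.succ (Fin.castLE hk j) := rfl
        have e3 : Fin.castLE hk1 (0 : Fin (k+1)) = (0 : Fin (n+1)) := rfl
        rw [e1, e2, e3]
        ring
      have hM'det : M'.det = a * (Matrix.of
          (fun i j : Fin k => S (Fin.castLE hk i) (Fin.castLE hk j))).det := by
        rw [Matrix.det_succ_column_zero]
        rw [Fin.sum_univ_succ]
        have h0 : M' 0 0 = a := by
          show M 0 0 + c 0 * M 0 0 = a
          have : c 0 = 0 := if_pos rfl
          rw [this, hM00, zero_mul, add_zero]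
        rw [h0]
        have : ∀ i : Fin k, (-1 : F) ^ ((i.succ : Fin (k+1)) : ℕ) * M' i.succ 0 *
            (M'.submatrix (Fin.succAbove i.succ) Fin.succ).det = 0 := by
          intro i; rw [hcol i]; ring
        rw [Finset.sum_congr rfl (fun i _ => this i), Finset.sum_const, smul_zero, add_zero,
          hsub]
        simp
      have hMdet : M.det ≠ 0 := hminor (k+1) hk1
      intro hcon
      rw [hM'det, hcon, mul_zero] at hdet
      exact hMdet hdet.symm
    obtain ⟨L, U, hL1, hL0, hU, hU0, hLU⟩ := ih S hS
    refine ⟨Matrix.of (Fin.cons (Fin.cons 1 0) (fun i' => Fin.cons (Y i'.succ 0 / a) (L i'))),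
      Matrix.of (Fin.cons (fun j => Y 0 j) (fun i' => Fin.cons 0 (U i'))), ?_, ?_, ?_, ?_, ?_⟩
    · intro i
      refine Fin.cases ?_ (fun i' => ?_) i <;> simp [hL1]
    · intro i j
      refine Fin.cases ?_ (fun i' => ?_) i <;> refine Fin.cases ?_ (fun j' => ?_) j <;>
        intro hij
      · exact absurd hij (lt_irrefl _)
      · simp only [of_apply, Fin.cons_zero, Fin.cons_succ, Pi.zero_apply]
      · exact absurd hij (by simp [Fin.lt_def])
      · simp only [of_apply, Fin.cons_succ]
        exact hL0 i' j' (by simpa [Fin.succ_lt_succ_iff] using hij)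
    · intro i
      refine Fin.cases ?_ (fun i' => ?_) i
      · simpa using ha
      · simpa using hU i'
    · intro i j
      refine Fin.cases ?_ (fun i' => ?_) i <;> refine Fin.cases ?_ (fun j' => ?_) j <;>
        intro hij
      · exact absurd hij (lt_irrefl _)
      · exact absurd hij (by simp [Fin.lt_def])
      · simp only [of_apply, Fin.cons_succ, Fin.cons_zero]
      · simp only [of_apply, Fin.cons_succ]
        exact hU0 i' j' (by simpa [Fin.succ_lt_succ_iff] using hij)
    · ext i j
      rw [Matrix.mul_apply, Fin.sum_univ_succ]
      refine Fin.cases ?_ (fun i' => ?_) i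
      · simp
      · refine Fin.cases ?_ (fun j' => ?_) j
        · simp only [of_apply, Fin.cons_succ, Fin.cons_zero]
          rw [Finset.sum_eq_zero (fun l _ => by simp)]
          rw [add_zero, div_mul_cancel₀ _ ha]
        · simp only [of_apply, Fin.cons_succ, Fin.cons_zero]
          have : ∑ l : Fin n, L i' l * U l j' = (L * U) i' j' := (Matrix.mul_apply).symm
          rw [this, ← hLU]
          simp only [hS_def, of_apply]
          field_simp
          ring

private lemma key_vanish {K : Type*} [Field K] [Infinite K] {n : ℕ}
    (p : MvPolynomial (Fin n × Fin n) K)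
    (hvanish : ∀ u b : Matrix (Fin n) (Fin n) K,
      (∀ i, u i i = 1) → (∀ i j : Fin n, j < i → u i j = 0) →
      (∀ i, b i i ≠ 0) → (∀ i j : Fin n, j < i → b i j = 0) →
      MvPolynomial.eval (fun st => (u * bigW K n * b) st.1 st.2) p = 0)
    {F : Type*} [Field F] [Algebra K F]
    (u b : Matrix (Fin n) (Fin n) F)
    (hu1 : ∀ i, u i i = 1) (hu0 : ∀ i j : Fin n, j < i → u i j = 0)
    (hb0 : ∀ i j : Fin n, j < i → b i j = 0) :
    aeval (R := K) (fun st : Fin n × Fin n => (u * bigW F n * b) st.1 st.2) p = 0 := by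
  classical
  set ι := ((Fin n × Fin n) ⊕ (Fin n × Fin n)) with hι
  set Umat : Matrix (Fin n) (Fin n) (MvPolynomial ι K) :=
    Matrix.of (fun i j => if i = j then 1 else if i < j then X (Sum.inl (i, j)) else 0)
    with hUmat
  set Bmat : Matrix (Fin n) (Fin n) (MvPolynomial ι K) :=
    Matrix.of (fun i j => if j < i then 0 else X (Sum.inr (i, j))) with hBmat
  set Q : MvPolynomial ι K :=
    aeval (fun st : Fin n × Fin n =>
      (Umat * bigW (MvPolynomial ι K) n * Bmat) st.1 st.2) p with hQ
  have hQv : ∀ v : ι → K, eval v Q =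
      eval (fun st : Fin n × Fin n =>
        ((Umat * bigW (MvPolynomial ι K) n * Bmat).map (eval v)) st.1 st.2) p := by
    intro v
    rw [hQ, aeval_def, eval₂_comp_left (eval v)]
    congr 1
    ext x : 1
    simp
  have hmapv : ∀ v : ι → K,
      (Umat * bigW (MvPolynomial ι K) n * Bmat).map (eval v) =
        Umat.map (eval v) * bigW K n * Bmat.map (eval v) := by
    intro v
    rw [Matrix.map_mul (f := eval v), Matrix.map_mul (f := eval v), bigW_map]
  have hQ0 : ∀ v : ι → K, (∀ i : Fin n, v (Sum.inr (i, i)) ≠ 0) → eval v Q = 0 := by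
    intro v hv
    rw [hQv, hmapv]
    apply hvanish
    · intro i
      simp [hUmat, Matrix.map_apply]
    · intro i j hij
      simp [hUmat, Matrix.map_apply, hij.ne', lt_asymm hij]
    · intro i
      simpa [hBmat, Matrix.map_apply] using hv i
    · intro i j hij
      simp [hBmat, Matrix.map_apply, hij]
  have hprod : Q * ∏ i : Fin n, X (Sum.inr (i, i)) = 0 := by
    apply MvPolynomial.funext
    intro v
    rw [_root_.map_mul, _root_.map_zero, map_prod]
    by_cases h : ∀ i : Fin n, v (Sum.inr (i, i)) ≠ 0
    · rw [hQ0 v h, zero_mul]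
    · push_neg at h
      obtain ⟨i, hi⟩ := h
      have : (∏ i : Fin n, eval v (X (Sum.inr (i, i)) : MvPolynomial ι K)) = 0 :=
        Finset.prod_eq_zero (Finset.mem_univ i) (by simp [hi])
      rw [this, mul_zero]
  have hQzero : Q = 0 := by
    rcases mul_eq_zero.mp hprod with h | h
    · exact h
    · exact absurd h (Finset.prod_ne_zero_iff.mpr (fun i _ => X_ne_zero _))
  set ψ : MvPolynomial ι K →ₐ[K] F :=
    aeval (Sum.elim (fun st : Fin n × Fin n => u st.1 st.2)
      (fun st : Fin n × Fin n => b st.1 st.2)) with hψ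
  have h1 : ψ Q = aeval (fun st : Fin n × Fin n =>
      ψ ((Umat * bigW (MvPolynomial ι K) n * Bmat) st.1 st.2)) p := by
    rw [hQ, ← comp_aeval]; rfl
  have h2 : (Umat * bigW (MvPolynomial ι K) n * Bmat).map ψ = u * bigW F n * b := by
    rw [show (⇑ψ : MvPolynomial ι K → F) = ⇑ψ.toRingHom from rfl,
      Matrix.map_mul (f := ψ.toRingHom), Matrix.map_mul (f := ψ.toRingHom), bigW_map]
    have hU : Umat.map ψ.toRingHom = u := by
      ext i j
      simp only [Matrix.map_apply, hUmat, of_apply]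
      split_ifs with h h'
      · subst h; rw [_root_.map_one, hu1]
      · show ψ (X (Sum.inl (i, j))) = u i j
        rw [hψ, aeval_X]
        rfl
      · rw [_root_.map_zero]
        exact (hu0 i j (lt_of_le_of_ne (not_lt.mp h') (fun hji => h hji.symm))).symm
    have hB : Bmat.map ψ.toRingHom = b := by
      ext i j
      simp only [Matrix.map_apply, hBmat, of_apply]
      split_ifs with h
      · rw [_root_.map_zero]; exact (hb0 i j h).symm
      · show ψ (X (Sum.inr (i, j))) = b i j
        rw [hψ, aeval_X]
        rfl
    rw [hU, hB]
  have h3 : (fun st : Fin n × Fin n => (u * bigW F n * b) st.1 st.2)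
      = fun st : Fin n × Fin n =>
          ψ ((Umat * bigW (MvPolynomial ι K) n * Bmat) st.1 st.2) := by
    funext st
    rw [← h2]
    rfl
  rw [h3, ← h1, hQzero, _root_.map_zero]

/-- the big Bruhat cell N w₀ B is Zariski-dense in GL(n,K): every polynomial
in the matrix entries vanishing on N w₀ B vanishes on all invertible matrices. -/
theorem stmt11 {K : Type*} [Field K] [Infinite K] {n : ℕ}
    (w₀ : Matrix (Fin n) (Fin n) K)
    (hw : ∀ i j : Fin n, w₀ i j = if (i : ℕ) + (j : ℕ) + 1 = n then 1 else 0)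
    (p : MvPolynomial (Fin n × Fin n) K)
    (hvanish : ∀ u b : Matrix (Fin n) (Fin n) K,
      (∀ i, u i i = 1) → (∀ i j : Fin n, j < i → u i j = 0) →
      (∀ i, b i i ≠ 0) → (∀ i j : Fin n, j < i → b i j = 0) →
      MvPolynomial.eval (fun st => (u * w₀ * b) st.1 st.2) p = 0) :
    ∀ X : Matrix (Fin n) (Fin n) K, IsUnit X.det →
      MvPolynomial.eval (fun st => X st.1 st.2) p = 0 := by
  classical
  suffices hp : p = 0 by
    intro X _
    rw [hp, map_zero]
  have hw0 : w₀ = bigW K n := by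
    ext i j; rw [hw]; rfl
  rw [hw0] at hvanish
  let R' := MvPolynomial (Fin n × Fin n) K
  let F := FractionRing R'
  set G : Matrix (Fin n) (Fin n) F :=
    Matrix.of (fun i j => algebraMap R' F (X (i, j))) with hG
  set Y : Matrix (Fin n) (Fin n) F := bigW F n * G with hY
  -- the leading principal minors of Y are nonzero
  have hminor : ∀ (k : ℕ) (hk : k ≤ n),
      (Matrix.of fun i j : Fin k => Y (Fin.castLE hk i) (Fin.castLE hk j)).det ≠ 0 := by
    intro k hk
    have hYdesc : (Matrix.of fun i j : Fin k => Y (Fin.castLE hk i) (Fin.castLE hk j)) =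
        (algebraMap R' F).mapMatrix
          (Matrix.of fun i j : Fin k => (X ((Fin.castLE hk i).rev, Fin.castLE hk j) : R')) := by
      ext i j
      simp only [of_apply, RingHom.mapMatrix_apply, Matrix.map_apply, hY]
      rw [bigW_mul]
      rfl
    rw [hYdesc, ← RingHom.map_det]
    set Mp : Matrix (Fin k) (Fin k) R' :=
      Matrix.of fun i j : Fin k => (X ((Fin.castLE hk i).rev, Fin.castLE hk j) : R') with hMp
    have hMpdet : Mp.det ≠ 0 := by
      intro hcon
      set w : (Fin n × Fin n) → K :=
        fun st => if (st.1 : ℕ) + (st.2 : ℕ) + 1 = n then 1 else 0 with hwdef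
      have h1 : (eval w) Mp.det = 0 := by rw [hcon, map_zero]
      rw [RingHom.map_det] at h1
      have h2 : (eval w : R' →+* K).mapMatrix Mp = (1 : Matrix (Fin k) (Fin k) K) := by
        ext i j
        simp only [RingHom.mapMatrix_apply, Matrix.map_apply, hMp, of_apply, eval_X, hwdef]
        rw [Matrix.one_apply]
        have hv := Fin.val_rev (Fin.castLE hk i)
        have hi : (i : ℕ) < k := i.isLt
        have hj : (j : ℕ) < k := j.isLt
        have hci : ((Fin.castLE hk i : Fin n) : ℕ) = (i : ℕ) := rfl
        have hcj : ((Fin.castLE hk j : Fin n) : ℕ) = (j : ℕ) := rfl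
        by_cases h : i = j
        · subst h
          rw [if_pos (by omega), if_pos rfl]
        · rw [if_neg, if_neg h]
          intro hc
          exact h (Fin.ext (by omega))
      rw [h2, Matrix.det_one] at h1
      exact one_ne_zero h1
    intro hcon
    apply hMpdet
    apply IsFractionRing.injective R' F
    rw [hcon, map_zero]
  obtain ⟨L, U, hL1, hL0, hU, hU0, hLU⟩ := lu_exists n Y hminor
  set u : Matrix (Fin n) (Fin n) F := bigW F n * L * bigW F n with hu
  have hu_entry : ∀ i j, u i j = L i.rev j.rev := by
    intro i j
    rw [hu, mul_bigW, bigW_mul]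
  have hu1 : ∀ i, u i i = 1 := fun i => by rw [hu_entry, hL1]
  have hu0 : ∀ i j : Fin n, j < i → u i j = 0 := by
    intro i j hij
    rw [hu_entry]
    exact hL0 _ _ (Fin.rev_lt_rev.mpr hij)
  have happ := key_vanish p hvanish u U hu1 hu0 hU0
  have hprod : u * bigW F n * U = G := by
    rw [hu, mul_assoc (bigW F n * L) (bigW F n) (bigW F n), bigW_bigW, mul_one,
      mul_assoc (bigW F n) L U, ← hLU, hY, ← mul_assoc, bigW_bigW, one_mul]
  rw [hprod] at happ
  have hGa : aeval (R := K) (fun st : Fin n × Fin n => G st.1 st.2) p = algebraMap R' F p := by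
    have h := comp_aeval (R := K) (f := (X : Fin n × Fin n → R'))
      (φ := IsScalarTower.toAlgHom K R' F)
    calc aeval (R := K) (fun st : Fin n × Fin n => G st.1 st.2) p
        = aeval (fun i : Fin n × Fin n => (IsScalarTower.toAlgHom K R' F) (X i)) p := rfl
      _ = ((IsScalarTower.toAlgHom K R' F).comp (aeval X)) p := by rw [h]
      _ = algebraMap R' F (aeval X p) := rfl
      _ = algebraMap R' F p := by rw [aeval_X_left, AlgHom.id_apply]
  rw [hGa] at happ
  apply IsFractionRing.injective R' F
  rw [happ, map_zero]
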